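/- arXiv:2201.12190 — 6 statements merged into one kernel-verified Lean document; each statement's English description precedes it below -/
import Mathlib

section
/- Let X be a complex Banach space and let L, M, E, F : ℂ → L(X,X) be analytic operator-valued functions such that E(z) and F(z) are invertible for every z ∈ ℂ and M(z) = F(z) L(z) E(z) for all z. Fix μ ∈ ℂ. If (x₀,…,x_{k-1}) is a Jordan chain of length k for L at μ, then there exists a Jordan chain (y₀,…,y_{k-1}) of length k for M at μ. Consequently the maximal Jordan chain lengths (and hence the algebraic multiplicities, when defined) of L and M at μ coincide. -/
open Asymptotics

/-- A Jordan chain of length `k` at `μ` for an analytic operator-valued function `L`. -/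
def IsJordanChain {X : Type*} [NormedAddCommGroup X] [NormedSpace ℂ X]
    (L : ℂ → (X →L[ℂ] X)) (μ : ℂ) (k : ℕ) (x : ℕ → X) : Prop :=
  x 0 ≠ 0 ∧
    (fun z => L z (∑ j ∈ Finset.range k, (z - μ) ^ j • x j))
      =O[nhds μ] fun z => (z - μ) ^ k

/-- Applying a continuous family of operators preserves big-O bounds. -/
lemma clm_apply_isBigO {X : Type*} [NormedAddCommGroup X] [NormedSpace ℂ X]
    {F : ℂ → (X →L[ℂ] X)} {g : ℂ → X} {h : ℂ → ℂ} {μ : ℂ}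
    (hF : ContinuousAt F μ) (hg : g =O[nhds μ] h) :
    (fun z => F z (g z)) =O[nhds μ] h := by
  have h1 : (fun z => F z (g z)) =O[nhds μ] g := by
    rw [isBigO_iff]
    refine ⟨‖F μ‖ + 1, ?_⟩
    have hb : ∀ᶠ z in nhds μ, ‖F z‖ < ‖F μ‖ + 1 :=
      hF.norm.eventually_lt_const (lt_add_one _)
    filter_upwards [hb] with z hz
    calc ‖F z (g z)‖ ≤ ‖F z‖ * ‖g z‖ := (F z).le_opNorm _
      _ ≤ (‖F μ‖ + 1) * ‖g z‖ := by
          exact mul_le_mul_of_nonneg_right hz.le (norm_nonneg _)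
  exact h1.trans hg

/-- Inversion of an analytic unit-valued family is analytic. -/
lemma ring_inverse_analytic {X : Type*} [NormedAddCommGroup X] [NormedSpace ℂ X]
    [CompleteSpace X] (A : ℂ → (X →L[ℂ] X)) (hA : ∀ z, AnalyticAt ℂ A z)
    (hAu : ∀ z, IsUnit (A z)) (z : ℂ) :
    AnalyticAt ℂ (fun w => Ring.inverse (A w)) z := by
  have h1 : AnalyticAt ℂ (Ring.inverse : (X →L[ℂ] X) → (X →L[ℂ] X)) (A z) := by
    have := analyticAt_inverse (𝕜 := ℂ) (hAu z).unit
    rwa [IsUnit.unit_spec] at this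
  exact h1.comp (hA z)

/-- Transfer of Jordan chains through an analytic factorization `M = F L E`. -/
lemma jordan_transfer {X : Type*} [NormedAddCommGroup X] [NormedSpace ℂ X] [CompleteSpace X]
    (L M E F : ℂ → (X →L[ℂ] X))
    (μ : ℂ)
    (hL : AnalyticAt ℂ L μ) (hE : ∀ z, AnalyticAt ℂ E z) (hF : ∀ z, AnalyticAt ℂ F z)
    (hEu : ∀ z, IsUnit (E z))
    (hfact : ∀ z, M z = F z ∘L L z ∘L E z)
    (k : ℕ) (x : ℕ → X) (hx : IsJordanChain L μ k x) :
    ∃ y : ℕ → X, IsJordanChain M μ k y := by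
  rcases Nat.eq_zero_or_pos k with hk | hk
  · subst hk
    refine ⟨x, hx.1, ?_⟩
    simp only [Finset.range_zero, Finset.sum_empty, map_zero, pow_zero]
    exact isBigO_zero _ _
  -- The inverse family
  set G : ℂ → (X →L[ℂ] X) := fun z => Ring.inverse (E z) with hGdef
  have hG : AnalyticAt ℂ G μ := ring_inverse_analytic E hE hEu μ
  -- The chain polynomial for L
  set P : ℂ → X := fun z => ∑ j ∈ Finset.range k, (z - μ) ^ j • x j with hPdef
  have hP : AnalyticAt ℂ P μ := by
    apply Finset.analyticAt_fun_sum
    intro j _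
    exact (((analyticAt_id.sub analyticAt_const).pow j).smul analyticAt_const)
  set q : ℂ → X := fun z => G z (P z) with hqdef
  have hq : AnalyticAt ℂ q μ := by
    have hb := (ContinuousLinearMap.apply ℂ X).analyticAt_bilinear (P μ, G μ)
    exact AnalyticAt.comp (x := μ) (f := fun z => (P z, G z)) hb (hP.prod hG)
  obtain ⟨p, hp⟩ := hq
  set y : ℕ → X := fun j => p j (fun _ => 1) with hydef
  -- E z (q z) = P z
  have hEq2 : ∀ z, E z (q z) = P z := by
    intro z
    have h1 : E z * G z = 1 := Ring.mul_inverse_cancel _ (hEu z)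
    calc E z (q z) = (E z * G z) (P z) := by rw [ContinuousLinearMap.mul_apply]
      _ = P z := by rw [h1, ContinuousLinearMap.one_apply]
  refine ⟨y, ?_, ?_⟩
  · -- y 0 ≠ 0
    have hy0 : y 0 = q μ := hp.coeff_zero _
    have hPμ : P μ = x 0 := by
      show (∑ j ∈ Finset.range k, (μ - μ) ^ j • x j) = x 0
      rw [Finset.sum_eq_single_of_mem 0 (Finset.mem_range.2 hk)]
      · simp
      · intro j _ hj
        simp [zero_pow hj]
    intro hc
    apply hx.1
    have h6 : E μ (q μ) = 0 := by rw [← hy0, hc, map_zero]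
    rw [hEq2, hPμ] at h6
    exact h6
  · -- the big-O estimate
    have herr : (fun z => q z - ∑ j ∈ Finset.range k, (z - μ) ^ j • y j)
        =O[nhds μ] fun z => (z - μ) ^ k := by
      have h1 := hp.isBigO_sub_partialSum_pow k
      have h2 : Filter.Tendsto (fun z : ℂ => z - μ) (nhds μ) (nhds 0) := by
        simpa using Filter.Tendsto.sub_const (Filter.tendsto_id : Filter.Tendsto id (nhds μ) (nhds μ)) μ
      have h3 := h1.comp_tendsto h2
      have hps : ∀ w : ℂ, p.partialSum k w = ∑ j ∈ Finset.range k, w ^ j • y j := by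
        intro w
        unfold FormalMultilinearSeries.partialSum
        refine Finset.sum_congr rfl fun j _ => ?_
        have : (fun _ : Fin j => w) = fun _ : Fin j => w • (1 : ℂ) := by
          funext i; simp
        rw [this, ContinuousMultilinearMap.map_smul_univ]
        simp [hydef]
      have h4 : (fun z => q z - ∑ j ∈ Finset.range k, (z - μ) ^ j • y j)
          =O[nhds μ] fun z => ‖z - μ‖ ^ k := by
        refine h3.congr_left fun z => ?_
        simp only [Function.comp_apply, hps]
        congr 1
        congr 1
        ring
      refine h4.trans (IsBigO.of_bound 1 ?_)
      filter_upwards with z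
      simp [norm_pow]
    have hterr : (fun z => (∑ j ∈ Finset.range k, (z - μ) ^ j • y j) - q z)
        =O[nhds μ] fun z => (z - μ) ^ k := by
      refine herr.neg_left.congr_left fun z => ?_
      rw [neg_sub]
    have t1 : (fun z => F z (L z (P z))) =O[nhds μ] fun z => (z - μ) ^ k :=
      clm_apply_isBigO (hF μ).continuousAt hx.2
    have t2 := clm_apply_isBigO (hE μ).continuousAt hterr
    have t3 := clm_apply_isBigO hL.continuousAt t2
    have t4 := clm_apply_isBigO (hF μ).continuousAt t3
    refine (t1.add t4).congr_left fun z => ?_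
    rw [hfact]
    simp only [ContinuousLinearMap.comp_apply]
    rw [← map_add (F z), ← map_add (L z)]
    congr 2
    rw [← hEq2 z, ← map_add (E z)]
    congr 1
    abel

/-- Jordan chains transfer through analytic equivalence
`M(z) = F(z) L(z) E(z)`, hence the possible chain lengths (and so the algebraic
multiplicities) of `L` and `M` at `μ` coincide. -/
theorem stmt_4 {X : Type*} [NormedAddCommGroup X] [NormedSpace ℂ X] [CompleteSpace X]
    (L M E F : ℂ → (X →L[ℂ] X))
    (hL : ∀ z, AnalyticAt ℂ L z) (hM : ∀ z, AnalyticAt ℂ M z)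
    (hE : ∀ z, AnalyticAt ℂ E z) (hF : ∀ z, AnalyticAt ℂ F z)
    (hEu : ∀ z, IsUnit (E z)) (hFu : ∀ z, IsUnit (F z))
    (hfact : ∀ z, M z = F z ∘L L z ∘L E z)
    (μ : ℂ) (k : ℕ) (x : ℕ → X) (hx : IsJordanChain L μ k x) :
    (∃ y : ℕ → X, IsJordanChain M μ k y) ∧
      {m : ℕ | ∃ w : ℕ → X, IsJordanChain L μ m w}
        = {m : ℕ | ∃ w : ℕ → X, IsJordanChain M μ m w} := by
  have hfact' : ∀ z, L z = (fun w => Ring.inverse (F w)) z ∘L M z ∘L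
      (fun w => Ring.inverse (E w)) z := by
    intro z
    rw [hfact z]
    simp only [← ContinuousLinearMap.mul_def]
    rw [mul_assoc (F z), mul_assoc (L z), Ring.mul_inverse_cancel _ (hEu z), mul_one,
      ← mul_assoc, Ring.inverse_mul_cancel _ (hFu z), one_mul]
  constructor
  · exact jordan_transfer L M E F μ (hL μ) hE hF hEu hfact k x hx
  · ext m
    simp only [Set.mem_setOf_eq]
    constructor
    · rintro ⟨w, hw⟩
      exact jordan_transfer L M E F μ (hL μ) hE hF hEu hfact m w hw
    · rintro ⟨w, hw⟩
      exact jordan_transfer M L (fun w => Ring.inverse (E w)) (fun w => Ring.inverse (F w))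
        μ (hM μ) (ring_inverse_analytic E hE hEu) (ring_inverse_analytic F hF hFu)
        (fun z => isUnit_ringInverse.2 (hEu z)) hfact' m w hw
end

section
/- Let X be a complex Banach space, T : X → X bounded, n ∈ ℕ, and Δ : ℂ → ℂ^{n×n} a characteristic matrix function for T, i.e. there exist analytic E, F : ℂ → L(ℂ^n ⊕ X) with E(z), F(z) invertible for all z such that diag(Δ(z), I_X) = F(z) · diag(I_{ℂ^n}, I - zT) · E(z). Then for every μ ∈ ℂ \ {0}: μ⁻¹ is an eigenvalue of T if and only if det Δ(μ) = 0. -/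
/-- if `Δ` is a characteristic matrix function for `T`, then for
`μ ≠ 0`, `μ⁻¹` is an eigenvalue of `T` iff `det Δ(μ) = 0`. -/
theorem stmt_5 {X : Type*} [NormedAddCommGroup X] [NormedSpace ℂ X] [CompleteSpace X]
    (n : ℕ) (T : X →L[ℂ] X) (Δ : ℂ → Matrix (Fin n) (Fin n) ℂ)
    (hΔ : ∀ (i j : Fin n) (z : ℂ), AnalyticAt ℂ (fun w => Δ w i j) z)
    (E F : ℂ → (((Fin n → ℂ) × X) →L[ℂ] ((Fin n → ℂ) × X)))
    (hE : ∀ z, AnalyticAt ℂ E z) (hF : ∀ z, AnalyticAt ℂ F z)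
    (hEu : ∀ z, IsUnit (E z)) (hFu : ∀ z, IsUnit (F z))
    (hfact : ∀ z : ℂ,
      (LinearMap.toContinuousLinearMap ((Δ z).mulVecLin)).prodMap
          (ContinuousLinearMap.id ℂ X)
        = F z ∘L
            ((ContinuousLinearMap.id ℂ (Fin n → ℂ)).prodMap (1 - z • T)) ∘L E z)
    (μ : ℂ) (hμ : μ ≠ 0) :
    (∃ x : X, x ≠ 0 ∧ T x = μ⁻¹ • x) ↔ (Δ μ).det = 0 := by
  -- units of the CLM ring are injective
  have key : ∀ (G : ((Fin n → ℂ) × X) →L[ℂ] ((Fin n → ℂ) × X)), IsUnit G →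
      Function.Injective G := by
    rintro G ⟨u, rfl⟩ a b hab
    have h1 : (↑(u⁻¹ * u) : ((Fin n → ℂ) × X) →L[ℂ] ((Fin n → ℂ) × X)) a
        = (↑(u⁻¹ * u) : ((Fin n → ℂ) × X) →L[ℂ] ((Fin n → ℂ) × X)) b := by
      simp only [Units.val_mul, ContinuousLinearMap.mul_apply, hab]
    rw [inv_mul_cancel] at h1
    simpa using h1
  constructor
  · rintro ⟨x, hx0, hTx⟩
    have hDx : (1 - μ • T) x = 0 := by
      simp [ContinuousLinearMap.sub_apply, ContinuousLinearMap.smul_apply, hTx, smul_smul,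
        mul_inv_cancel₀ hμ]
    obtain ⟨u, hu⟩ := hEu μ
    set p : (Fin n → ℂ) × X :=
      (↑u⁻¹ : ((Fin n → ℂ) × X) →L[ℂ] ((Fin n → ℂ) × X)) ((0, x) : (Fin n → ℂ) × X) with hp
    have hEp : E μ p = ((0, x) : (Fin n → ℂ) × X) := by
      rw [← hu, hp]
      show ((↑u : ((Fin n → ℂ) × X) →L[ℂ] ((Fin n → ℂ) × X)) *
          (↑u⁻¹ : ((Fin n → ℂ) × X) →L[ℂ] ((Fin n → ℂ) × X)))
          ((0, x) : (Fin n → ℂ) × X) = ((0, x) : (Fin n → ℂ) × X)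
      rw [← Units.val_mul, mul_inv_cancel]
      simp
    have hzero : ((LinearMap.toContinuousLinearMap ((Δ μ).mulVecLin)).prodMap
        (ContinuousLinearMap.id ℂ X)) p = 0 := by
      rw [hfact μ]
      simp [ContinuousLinearMap.comp_apply, hEp, hDx, ContinuousLinearMap.coe_prodMap',
        Prod.map, Prod.ext_iff, Prod.mk_zero_zero]
    have hmv : (Δ μ).mulVec p.1 = 0 ∧ p.2 = 0 := by
      simpa [ContinuousLinearMap.coe_prodMap', Prod.map, Prod.ext_iff] using hzero
    have hpne : p ≠ 0 := by
      intro h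
      apply hx0
      have h5 : E μ p = 0 := by rw [h]; exact map_zero _
      rw [hEp] at h5
      exact ((Prod.ext_iff.mp h5).2)
    have hp1 : p.1 ≠ 0 := by
      intro h
      exact hpne (Prod.ext_iff.mpr ⟨h, hmv.2⟩)
    exact Matrix.exists_mulVec_eq_zero_iff.mp ⟨p.1, hp1, hmv.1⟩
  · intro hdet
    obtain ⟨v, hv0, hmv⟩ := Matrix.exists_mulVec_eq_zero_iff.mpr hdet
    have h1 : ((LinearMap.toContinuousLinearMap ((Δ μ).mulVecLin)).prodMap
        (ContinuousLinearMap.id ℂ X)) ((v, (0 : X)) : (Fin n → ℂ) × X) = 0 := by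
      simp [ContinuousLinearMap.coe_prodMap', Prod.map, hmv, Prod.ext_iff]
    rw [hfact μ] at h1
    set q := E μ ((v, (0 : X)) : (Fin n → ℂ) × X) with hq
    have h2 : ((ContinuousLinearMap.id ℂ (Fin n → ℂ)).prodMap (1 - μ • T)) q = 0 := by
      apply key _ (hFu μ)
      simpa [ContinuousLinearMap.comp_apply, map_zero] using h1
    have h3 : q.1 = 0 ∧ (1 - μ • T) q.2 = 0 := by
      simpa [ContinuousLinearMap.coe_prodMap', Prod.map, Prod.ext_iff] using h2
    have hqne : q ≠ 0 := by
      intro h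
      apply hv0
      have h6 : E μ ((v, (0 : X)) : (Fin n → ℂ) × X) = E μ 0 := by
        rw [← hq, h, map_zero]
      have h7 := key _ (hEu μ) h6
      exact (Prod.ext_iff.mp h7).1
    have hq2 : q.2 ≠ 0 := by
      intro h
      exact hqne (Prod.ext_iff.mpr ⟨h3.1, h⟩)
    refine ⟨q.2, hq2, ?_⟩
    have h4 : q.2 - μ • T q.2 = 0 := by
      simpa [ContinuousLinearMap.sub_apply, ContinuousLinearMap.smul_apply] using h3.2
    have h5 : q.2 = μ • T q.2 := by rwa [sub_eq_zero] at h4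
    have h6 : μ⁻¹ • (μ • T q.2) = T q.2 := by
      rw [smul_smul, inv_mul_cancel₀ hμ, one_smul]
    rw [← h6, ← h5]
end

section
/- Under the same hypotheses (Δ a characteristic matrix function for a bounded operator T on a complex Banach space X), if μ ∈ ℂ \ {0} and μ⁻¹ is an eigenvalue of T, then the geometric multiplicity of μ⁻¹ as an eigenvalue of T equals dim ker Δ(μ). More precisely, the map c ↦ (0, I_X) E(μ) (c, 0) is a linear bijection from ker Δ(μ) ⊆ ℂ^n onto ker(I - μT) ⊆ X, with inverse x ↦ (I_{ℂ^n}, 0) E(μ)⁻¹ (0, x). -/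
set_option maxHeartbeats 1000000 in
/-- if `Δ` is a characteristic matrix function for `T` and `μ⁻¹` is an
eigenvalue of `T` (`μ ≠ 0`), then `c ↦ (E(μ)(c,0))₂` is a bijection from `ker Δ(μ)`
onto `ker(I - μT)` with inverse `x ↦ (E(μ)⁻¹(0,x))₁`; in particular the geometric
multiplicity of `μ⁻¹` equals `dim ker Δ(μ)`. -/
theorem stmt_6 {X : Type*} [NormedAddCommGroup X] [NormedSpace ℂ X] [CompleteSpace X]
    (n : ℕ) (T : X →L[ℂ] X) (Δ : ℂ → Matrix (Fin n) (Fin n) ℂ)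
    (hΔ : ∀ (i j : Fin n) (z : ℂ), AnalyticAt ℂ (fun w => Δ w i j) z)
    (E Einv F : ℂ → (((Fin n → ℂ) × X) →L[ℂ] ((Fin n → ℂ) × X)))
    (hE : ∀ z, AnalyticAt ℂ E z) (hF : ∀ z, AnalyticAt ℂ F z)
    (hEinv : ∀ z, E z ∘L Einv z = 1 ∧ Einv z ∘L E z = 1)
    (hFu : ∀ z, IsUnit (F z))
    (hfact : ∀ z : ℂ,
      (LinearMap.toContinuousLinearMap ((Δ z).mulVecLin)).prodMap
          (ContinuousLinearMap.id ℂ X)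
        = F z ∘L
            ((ContinuousLinearMap.id ℂ (Fin n → ℂ)).prodMap (1 - z • T)) ∘L E z)
    (μ : ℂ) (hμ : μ ≠ 0)
    (hev : ∃ x : X, x ≠ 0 ∧ T x = μ⁻¹ • x) :
    Set.BijOn (fun c : Fin n → ℂ => (E μ (c, 0)).2)
        {c | (Δ μ).mulVec c = 0}
        {x | ((1 : X →L[ℂ] X) - μ • T) x = 0} ∧
    Set.InvOn (fun x : X => (Einv μ (0, x)).1)
        (fun c : Fin n → ℂ => (E μ (c, 0)).2)
        {c | (Δ μ).mulVec c = 0}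
        {x | ((1 : X →L[ℂ] X) - μ • T) x = 0} ∧
    Module.finrank ℂ
        (LinearMap.ker (((1 : X →L[ℂ] X) - μ • T) : X →ₗ[ℂ] X))
      = Module.finrank ℂ (LinearMap.ker ((Δ μ).mulVecLin)) := by
  -- F μ is injective
  have hFinj : ∀ v : (Fin n → ℂ) × X, F μ v = 0 → v = 0 := by
    intro v hv
    obtain ⟨u, hu⟩ := hFu μ
    have h := ContinuousLinearMap.ext_iff.mp u.inv_mul v
    simp only [ContinuousLinearMap.mul_apply, ContinuousLinearMap.one_apply] at h
    rw [hu, hv, map_zero] at h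
    exact h.symm
  -- pointwise factorization
  have hpt : ∀ v : (Fin n → ℂ) × X,
      ((Δ μ).mulVec v.1, v.2)
        = F μ ((E μ v).1, ((1 : X →L[ℂ] X) - μ • T) (E μ v).2) := by
    intro v
    have h := ContinuousLinearMap.ext_iff.mp (hfact μ) v
    simpa [ContinuousLinearMap.coe_prodMap', Prod.map, ContinuousLinearMap.comp_apply,
      Matrix.mulVecLin_apply] using h
  have hEE : ∀ v : (Fin n → ℂ) × X, E μ (Einv μ v) = v := by
    intro v
    have := ContinuousLinearMap.ext_iff.mp (hEinv μ).1 v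
    simpa [ContinuousLinearMap.comp_apply] using this
  have hEE' : ∀ v : (Fin n → ℂ) × X, Einv μ (E μ v) = v := by
    intro v
    have := ContinuousLinearMap.ext_iff.mp (hEinv μ).2 v
    simpa [ContinuousLinearMap.comp_apply] using this
  -- forward: c in ker Δμ
  have hfwd : ∀ c : Fin n → ℂ, (Δ μ).mulVec c = 0 →
      (E μ (c, 0)).1 = 0 ∧ ((1 : X →L[ℂ] X) - μ • T) (E μ (c, 0)).2 = 0 := by
    intro c hc
    have h := hpt (c, 0)
    simp only [hc] at h
    have h0 : F μ ((E μ (c, 0)).1, ((1 : X →L[ℂ] X) - μ • T) (E μ (c, 0)).2) = 0 := by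
      rw [← h]; rfl
    have := hFinj _ h0
    exact ⟨congrArg Prod.fst this, congrArg Prod.snd this⟩
  -- backward: x in ker (1 - μT)
  have hbwd : ∀ x : X, ((1 : X →L[ℂ] X) - μ • T) x = 0 →
      (Δ μ).mulVec (Einv μ (0, x)).1 = 0 ∧ (Einv μ (0, x)).2 = 0 := by
    intro x hx
    have h := hpt (Einv μ (0, x))
    rw [hEE (0, x)] at h
    simp only [hx, map_zero] at h
    have h' : (Δ μ).mulVec (Einv μ (0, x)).1 = 0 ∧ (Einv μ (0, x)).2 = 0 := by
      simpa [show ((0 : Fin n → ℂ), (0 : X)) = 0 from rfl] using h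
    exact h'
  -- for x in ker, E μ ((Einv μ (0,x)).1, 0) = (0, x)
  have hsur : ∀ x : X, ((1 : X →L[ℂ] X) - μ • T) x = 0 →
      E μ ((Einv μ (0, x)).1, 0) = (0, x) := by
    intro x hx
    have h2 := (hbwd x hx).2
    have hpair : ((Einv μ (0, x)).1, (0 : X)) = Einv μ (0, x) := by
      ext
      · rfl
      · exact h2.symm
    rw [hpair, hEE]
  -- left inverse on ker Δμ
  have hleft : ∀ c : Fin n → ℂ, (Δ μ).mulVec c = 0 →
      (Einv μ (0, (E μ (c, 0)).2)).1 = c := by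
    intro c hc
    have h1 := (hfwd c hc).1
    have hpair : ((0 : Fin n → ℂ), (E μ (c, 0)).2) = E μ (c, 0) := by
      ext
      · exact congrFun h1.symm _
      · rfl
    rw [hpair, hEE' (c, 0)]
  have hmaps : Set.MapsTo (fun c : Fin n → ℂ => (E μ (c, 0)).2)
      {c | (Δ μ).mulVec c = 0} {x | ((1 : X →L[ℂ] X) - μ • T) x = 0} :=
    fun c hc => (hfwd c hc).2
  have hinv : Set.InvOn (fun x : X => (Einv μ (0, x)).1)
      (fun c : Fin n → ℂ => (E μ (c, 0)).2)
      {c | (Δ μ).mulVec c = 0} {x | ((1 : X →L[ℂ] X) - μ • T) x = 0} := by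
    constructor
    · intro c hc; exact hleft c hc
    · intro x hx; exact congrArg Prod.snd (hsur x hx)
  have hmaps' : Set.MapsTo (fun x : X => (Einv μ (0, x)).1)
      {x | ((1 : X →L[ℂ] X) - μ • T) x = 0} {c | (Δ μ).mulVec c = 0} :=
    fun x hx => (hbwd x hx).1
  have hbij := hinv.bijOn hmaps hmaps'
  refine ⟨hbij, hinv, ?_⟩
  -- membership unfolding helpers
  have kmem1 : ∀ c : LinearMap.ker ((Δ μ).mulVecLin), (Δ μ).mulVec c.1 = 0 := by
    intro c
    have := c.2
    rwa [LinearMap.mem_ker, Matrix.mulVecLin_apply] at this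
  have kmem2 : ∀ x : LinearMap.ker ((((1 : X →L[ℂ] X) - μ • T) : X →ₗ[ℂ] X)),
      ((1 : X →L[ℂ] X) - μ • T) x.1 = 0 := by
    intro x
    exact x.2
  -- linear equivalence between kernels
  have equiv : LinearMap.ker ((Δ μ).mulVecLin) ≃ₗ[ℂ]
      LinearMap.ker ((((1 : X →L[ℂ] X) - μ • T) : X →ₗ[ℂ] X)) :=
    { toFun := fun c => ⟨(E μ (c.1, 0)).2, by
        exact (hfwd c.1 (kmem1 c)).2⟩
      map_add' := by
        intro a b
        apply Subtype.ext
        have hp : ((a.1 + b.1 : Fin n → ℂ), (0 : X)) = (a.1, 0) + (b.1, 0) := by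
          rw [Prod.mk_add_mk, add_zero]
        show (E μ ((a.1 + b.1 : Fin n → ℂ), (0 : X))).2
            = (E μ (a.1, 0)).2 + (E μ (b.1, 0)).2
        rw [hp, map_add]
        rfl
      map_smul' := by
        intro m a
        apply Subtype.ext
        have hp : ((m • a.1 : Fin n → ℂ), (0 : X)) = m • (a.1, (0 : X)) := by
          rw [Prod.smul_mk, smul_zero]
        show (E μ ((m • a.1 : Fin n → ℂ), (0 : X))).2 = m • (E μ (a.1, 0)).2
        rw [hp, map_smul]
        rfl
      invFun := fun x => ⟨(Einv μ (0, x.1)).1, by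
        rw [LinearMap.mem_ker, Matrix.mulVecLin_apply]
        exact (hbwd x.1 (kmem2 x)).1⟩
      left_inv := by
        intro a
        apply Subtype.ext
        exact hleft a.1 (kmem1 a)
      right_inv := by
        intro x
        apply Subtype.ext
        exact congrArg Prod.snd (hsur x.1 (kmem2 x)) }
  exact (equiv.finrank_eq).symm
end

section
/- Let A, B : ℝ → ℂ^{N×N} be continuous and h ∈ GL(N,ℂ) satisfy hA(t)h⁻¹ = A(t+τ), hB(t)h⁻¹ = B(t+τ). Let Y be the fundamental solution of y' = A(t)y with Y(0) = I, and let U(τ,0) : C([-τ,0],ℂ^N) → C([-τ,0],ℂ^N) be the time-τ solution operator of y'(t) = A(t)y(t) + B(t)y(t-τ), i.e. (U(τ,0)φ)(θ) = y(τ+θ) where y solves the DDE with initial history φ. Then for all θ ∈ [-τ,0] and φ: (h⁻¹U(τ,0)φ)(θ) = h⁻¹Y(τ+θ)φ(0) + ∫_{-τ}^{θ} Y(θ)Y(s)⁻¹ B(s) h⁻¹ φ(s) ds. -/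
open Matrix MeasureTheory intervalIntegral Set

namespace Stmt14

variable {N : ℕ}

section NormSection

attribute [local instance] Matrix.linftyOpNormedAddCommGroup Matrix.linftyOpNormedRing
  Matrix.linftyOpNormedSpace Matrix.linftyOpNormedAlgebra

noncomputable def matCLE (N : ℕ) : Matrix (Fin N) (Fin N) ℂ ≃L[ℂ] (Fin N → Fin N → ℂ) :=
  LinearEquiv.toContinuousLinearEquiv
  { toFun := fun M => M
    invFun := fun M => M
    map_add' := fun _ _ => rfl
    map_smul' := fun _ _ => rfl
    left_inv := fun _ => rfl
    right_inv := fun _ => rfl }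

theorem hasDerivAt_matrix {f : ℝ → Matrix (Fin N) (Fin N) ℂ} {f' : Matrix (Fin N) (Fin N) ℂ}
    {t : ℝ} :
    HasDerivAt f f' t ↔ ∀ i j, HasDerivAt (fun s => f s i j) (f' i j) t := by
  set e := (matCLE N).toContinuousLinearMap.restrictScalars ℝ with he
  set e' := (matCLE N).symm.toContinuousLinearMap.restrictScalars ℝ with he'
  constructor
  · intro hd i j
    have h1 : HasDerivAt (e ∘ f) (e f') t := e.hasFDerivAt.comp_hasDerivAt t hd
    exact hasDerivAt_pi.1 (hasDerivAt_pi.1 h1 i) j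
  · intro hd
    have h1 : HasDerivAt (fun s => e (f s)) (e f') t :=
      hasDerivAt_pi.2 fun i => hasDerivAt_pi.2 fun j => hd i j
    exact e'.hasFDerivAt.comp_hasDerivAt t h1

/-- entrywise derivative of the inverse of a matrix-valued function -/
theorem inv_hasDerivAt (Y : ℝ → Matrix (Fin N) (Fin N) ℂ) (hYu : ∀ t, IsUnit (Y t))
    (D : ℝ → Matrix (Fin N) (Fin N) ℂ)
    (hYd : ∀ t i j, HasDerivAt (fun s => Y s i j) (D t i j) t) (t : ℝ) (i j : Fin N) :
    HasDerivAt (fun s => (Y s)⁻¹ i j) ((-((Y t)⁻¹ * D t * (Y t)⁻¹)) i j) t := by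
  haveI : CompleteSpace (Matrix (Fin N) (Fin N) ℂ) := FiniteDimensional.complete ℂ _
  obtain ⟨u, hu⟩ := hYu t
  have hY : HasDerivAt Y (D t) t := hasDerivAt_matrix.2 (hYd t)
  have hinv : HasFDerivAt (Ring.inverse : Matrix (Fin N) (Fin N) ℂ → _)
      (-ContinuousLinearMap.mulLeftRight ℝ _ ↑u⁻¹ ↑u⁻¹) (Y t) :=
    hu ▸ hasFDerivAt_ringInverse u
  have hc := hinv.comp_hasDerivAt t hY
  have hcoe : (↑u⁻¹ : Matrix (Fin N) (Fin N) ℂ) = (Y t)⁻¹ := by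
    rw [Matrix.nonsing_inv_eq_ringInverse, ← hu, Ring.inverse_unit]
  have h2 : HasDerivAt (fun s => (Y s)⁻¹) (-((Y t)⁻¹ * D t * (Y t)⁻¹)) t := by
    simp only [Function.comp_def, Matrix.nonsing_inv_eq_ringInverse, hcoe] at hc ⊢
    exact hc
  exact hasDerivAt_matrix.1 h2 i j

/-- the spatio-temporal symmetry of the fundamental matrix -/
theorem symmetry (τ : ℝ) (A : ℝ → Matrix (Fin N) (Fin N) ℂ)
    (h : Matrix (Fin N) (Fin N) ℂ) (hh : IsUnit h)
    (hAsym : ∀ t, h * A t * h⁻¹ = A (t + τ))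
    (Y : ℝ → Matrix (Fin N) (Fin N) ℂ)
    (hY0 : Y 0 = 1) (hYu : ∀ t, IsUnit (Y t))
    (hYd : ∀ t i j, HasDerivAt (fun s => Y s i j) ((A t * Y t) i j) t) :
    ∀ t, Y (τ + t) = h * (Y t * (h⁻¹ * Y τ)) := by
  have hdet : IsUnit h.det := (Matrix.isUnit_iff_isUnit_det h).1 hh
  have hinv : h⁻¹ * h = 1 := Matrix.nonsing_inv_mul h hdet
  have hinv' : h * h⁻¹ = 1 := Matrix.mul_nonsing_inv h hdet
  have mc2 : ∀ X : Matrix (Fin N) (Fin N) ℂ, h⁻¹ * (h * X) = X := fun X => by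
    rw [← Matrix.mul_assoc, hinv, Matrix.one_mul]
  have mc1 : ∀ X : Matrix (Fin N) (Fin N) ℂ, h * (h⁻¹ * X) = X := fun X => by
    rw [← Matrix.mul_assoc, hinv', Matrix.one_mul]
  have Ydet : ∀ t, IsUnit (Y t).det := fun t => (Matrix.isUnit_iff_isUnit_det _).1 (hYu t)
  have mcY1 : ∀ t (X : Matrix (Fin N) (Fin N) ℂ), Y t * ((Y t)⁻¹ * X) = X := fun t X => by
    rw [← Matrix.mul_assoc, Matrix.mul_nonsing_inv _ (Ydet t), Matrix.one_mul]
  have mcY2 : ∀ t (X : Matrix (Fin N) (Fin N) ℂ), (Y t)⁻¹ * (Y t * X) = X := fun t X => by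
    rw [← Matrix.mul_assoc, Matrix.nonsing_inv_mul _ (Ydet t), Matrix.one_mul]
  have hYmat : ∀ t, HasDerivAt Y (A t * Y t) t := fun t => hasDerivAt_matrix.2 (hYd t)
  have hAh : ∀ t (X : Matrix (Fin N) (Fin N) ℂ),
      h⁻¹ * (A (τ + t) * X) = A t * (h⁻¹ * X) := by
    intro t X
    rw [← Matrix.mul_assoc, ← Matrix.mul_assoc, add_comm τ t, ← hAsym t,
      ← Matrix.mul_assoc, ← Matrix.mul_assoc, hinv, Matrix.one_mul]
  set F : ℝ → Matrix (Fin N) (Fin N) ℂ := fun t => (Y t)⁻¹ * (h⁻¹ * Y (τ + t)) with hF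
  have hYs : ∀ t, HasDerivAt (fun s => Y (τ + s)) (A (τ + t) * Y (τ + t)) t := by
    intro t
    have h1 : HasDerivAt (fun s : ℝ => τ + s) 1 t := by
      simpa using (hasDerivAt_id t).const_add τ
    have := (hYmat (τ + t)).scomp t h1
    simp only [Function.comp_def, one_smul] at this
    exact this
  have hYinv : ∀ t, HasDerivAt (fun s => (Y s)⁻¹) (-((Y t)⁻¹ * (A t * Y t) * (Y t)⁻¹)) t :=
    fun t => hasDerivAt_matrix.2 fun i j => inv_hasDerivAt Y hYu _ hYd t i j
  have hFd : ∀ t, HasDerivAt F 0 t := by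
    intro t
    have h2 : HasDerivAt (fun s => h⁻¹ * Y (τ + s)) (h⁻¹ * (A (τ + t) * Y (τ + t))) t :=
      (hYs t).const_mul h⁻¹
    have h3 : HasDerivAt F (-((Y t)⁻¹ * (A t * Y t) * (Y t)⁻¹) * (h⁻¹ * Y (τ + t)) + (Y t)⁻¹ * (h⁻¹ * (A (τ + t) * Y (τ + t)))) t := (hYinv t).mul h2
    convert h3 using 1
    simp only [Matrix.mul_assoc, neg_mul, hAh, mcY1, mcY2]
    abel
  have hconst : ∀ t, F t = F 0 := fun t =>
    is_const_of_deriv_eq_zero (fun s => (hFd s).differentiableAt) (fun s => (hFd s).deriv) t 0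
  intro t
  have hF0 : F 0 = h⁻¹ * Y τ := by
    simp [hF, hY0, inv_one]
  have := hconst t
  rw [hF0] at this
  calc Y (τ + t) = h * (Y t * ((Y t)⁻¹ * (h⁻¹ * Y (τ + t)))) := by rw [mcY1, mc1]
    _ = h * (Y t * (h⁻¹ * Y τ)) := by rw [show (Y t)⁻¹ * (h⁻¹ * Y (τ + t)) = h⁻¹ * Y τ from this]

end NormSection

/-- derivative of `s ↦ M s *ᵥ v s` from entrywise data -/
theorem hasDerivAt_mulVec {M : ℝ → Matrix (Fin N) (Fin N) ℂ} {M' : Matrix (Fin N) (Fin N) ℂ}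
    {v : ℝ → Fin N → ℂ} {v' : Fin N → ℂ} {t : ℝ}
    (hM : ∀ i j, HasDerivAt (fun s => M s i j) (M' i j) t)
    (hv : HasDerivAt v v' t) :
    HasDerivAt (fun s => (M s).mulVec (v s)) (M'.mulVec (v t) + (M t).mulVec v') t := by
  rw [hasDerivAt_pi]
  intro i
  have hsum := HasDerivAt.fun_sum (u := Finset.univ)
    (A := fun j s => M s i j * v s j)
    (A' := fun j => M' i j * v t j + M t i j * v' j)
    (fun j _ => (hM i j).mul (hasDerivAt_pi.1 hv j))
  simpa [Matrix.mulVec, dotProduct, Finset.sum_add_distrib] using hsum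

end Stmt14




set_option maxHeartbeats 1000000 in
/-- explicit formula for `h⁻¹ U(τ,0)` applied to an initial history
`φ`, for a delay equation whose coefficients have the spatio-temporal symmetry
`h A(t) h⁻¹ = A(t+τ)`, `h B(t) h⁻¹ = B(t+τ)`. -/
theorem stmt_14 {N : ℕ} (τ : ℝ) (hτ : 0 < τ)
    (A B : ℝ → Matrix (Fin N) (Fin N) ℂ)
    (hA : Continuous A) (hB : Continuous B)
    (h : Matrix (Fin N) (Fin N) ℂ) (hh : IsUnit h)
    (hAsym : ∀ t, h * A t * h⁻¹ = A (t + τ))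
    (hBsym : ∀ t, h * B t * h⁻¹ = B (t + τ))
    (Y : ℝ → Matrix (Fin N) (Fin N) ℂ)
    (hY0 : Y 0 = 1) (hYu : ∀ t, IsUnit (Y t))
    (hYd : ∀ (t : ℝ) (i j : Fin N),
      HasDerivAt (fun s => Y s i j) ((A t * Y t) i j) t)
    (φ : ℝ → (Fin N → ℂ)) (hφ : ContinuousOn φ (Set.Icc (-τ) 0))
    (y : ℝ → (Fin N → ℂ))
    (hist : ∀ t ∈ Set.Icc (-τ) 0, y t = φ t)
    (hyd : ∀ t ∈ Set.Icc (0:ℝ) τ,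
      HasDerivAt y ((A t).mulVec (y t) + (B t).mulVec (y (t - τ))) t) :
    ∀ θ ∈ Set.Icc (-τ) 0,
      h⁻¹.mulVec (y (τ + θ))
        = (h⁻¹ * Y (τ + θ)).mulVec (φ 0)
          + ∫ s in (-τ)..θ, (Y θ * (Y s)⁻¹ * B s * h⁻¹).mulVec (φ s) := by
  intro θ hθ
  obtain ⟨hθ1, hθ2⟩ := hθ
  have hdet : IsUnit h.det := (Matrix.isUnit_iff_isUnit_det h).1 hh
  have hinv : h⁻¹ * h = 1 := Matrix.nonsing_inv_mul h hdet
  have hinv' : h * h⁻¹ = 1 := Matrix.mul_nonsing_inv h hdet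
  have mc2 : ∀ X : Matrix (Fin N) (Fin N) ℂ, h⁻¹ * (h * X) = X := fun X => by
    rw [← Matrix.mul_assoc, hinv, Matrix.one_mul]
  have mc1 : ∀ X : Matrix (Fin N) (Fin N) ℂ, h * (h⁻¹ * X) = X := fun X => by
    rw [← Matrix.mul_assoc, hinv', Matrix.one_mul]
  have Ydet : ∀ t, IsUnit (Y t).det := fun t => (Matrix.isUnit_iff_isUnit_det _).1 (hYu t)
  have mcY1 : ∀ t (X : Matrix (Fin N) (Fin N) ℂ), Y t * ((Y t)⁻¹ * X) = X := fun t X => by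
    rw [← Matrix.mul_assoc, Matrix.mul_nonsing_inv _ (Ydet t), Matrix.one_mul]
  have mcY2 : ∀ t (X : Matrix (Fin N) (Fin N) ℂ), (Y t)⁻¹ * (Y t * X) = X := fun t X => by
    rw [← Matrix.mul_assoc, Matrix.nonsing_inv_mul _ (Ydet t), Matrix.one_mul]
  have key := Stmt14.symmetry τ A h hh hAsym Y hY0 hYu hYd
  have cYinv : ∀ i j, Continuous fun s => (Y s)⁻¹ i j := fun i j =>
    continuous_iff_continuousAt.2 fun t =>
      (Stmt14.inv_hasDerivAt Y hYu _ hYd t i j).continuousAt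
  have cYinvM : Continuous fun s => (Y s)⁻¹ := continuous_matrix cYinv
  set x := τ + θ with hx
  have hx0 : 0 ≤ x := by simp only [hx]; linarith
  have hxτ : x ≤ τ := by simp only [hx]; linarith
  set f : ℝ → (Fin N → ℂ) := fun s => ((Y s)⁻¹ * B s).mulVec (φ (s - τ)) with hf
  have hφcont : ContinuousOn (fun s => φ (s - τ)) (Icc 0 τ) := by
    apply hφ.comp (continuous_sub_right τ).continuousOn
    intro s hs
    exact ⟨by simp only [mem_Icc] at hs ⊢; linarith [hs.1], by
      simp only [mem_Icc] at hs ⊢; linarith [hs.2]⟩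
  have hfcont : ContinuousOn f (Icc 0 τ) := by
    apply continuousOn_pi.2
    intro i
    simp only [hf, Matrix.mulVec, dotProduct]
    apply continuousOn_finset_sum
    intro j _
    exact (((cYinvM.matrix_mul hB).matrix_elem i j).continuousOn).mul
      ((continuous_apply j).comp_continuousOn hφcont)
  set g : ℝ → (Fin N → ℂ) := fun s => ((Y s)⁻¹).mulVec (y s) with hg
  have hgd : ∀ s ∈ Icc (0:ℝ) x, HasDerivAt g (f s) s := by
    intro s hs
    have hs' : s ∈ Icc (0:ℝ) τ := ⟨hs.1, le_trans hs.2 hxτ⟩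
    have hd := Stmt14.hasDerivAt_mulVec
      (fun i j => Stmt14.inv_hasDerivAt Y hYu _ hYd s i j) (hyd s hs')
    have hyhist : y (s - τ) = φ (s - τ) :=
      hist _ ⟨by linarith [hs'.1], by linarith [hs'.2]⟩
    convert hd using 1
    simp only [hf, Matrix.mulVec_add, Matrix.mulVec_mulVec, Matrix.neg_mulVec, hyhist]
    rw [show (Y s)⁻¹ * (A s * Y s) * (Y s)⁻¹ = (Y s)⁻¹ * A s by
      rw [Matrix.mul_assoc ((Y s)⁻¹), Matrix.mul_assoc,
        Matrix.mul_nonsing_inv _ (Ydet s), Matrix.mul_one]]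
    abel
  have hint : IntervalIntegrable f volume 0 x :=
    (hfcont.mono (by rw [uIcc_of_le hx0]; exact Icc_subset_Icc le_rfl hxτ)).intervalIntegrable
  have hFTC : ∫ s in (0:ℝ)..x, f s = g x - g 0 :=
    integral_eq_sub_of_hasDerivAt (fun s hs => hgd s (by rwa [uIcc_of_le hx0] at hs)) hint
  have hg0 : g 0 = φ 0 := by
    simp [hg, hY0, inv_one, Matrix.one_mulVec, hist 0 ⟨by linarith, le_rfl⟩]
  have hgx : g x = φ 0 + ∫ s in (0:ℝ)..x, f s := by rw [hFTC, hg0]; abel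
  have hyx : y x = (Y x).mulVec (g x) := by
    simp only [hg, Matrix.mulVec_mulVec, Matrix.mul_nonsing_inv _ (Ydet x), Matrix.one_mulVec]
  have hpull : (h⁻¹ * Y x).mulVec (∫ s in (0:ℝ)..x, f s)
      = ∫ s in (0:ℝ)..x, (h⁻¹ * Y x * ((Y s)⁻¹ * B s)).mulVec (φ (s - τ)) := by
    have hcc := (LinearMap.toContinuousLinearMap ((h⁻¹ * Y x).mulVecLin)).intervalIntegral_comp_comm hint
    simp only [LinearMap.coe_toContinuousLinearMap', Matrix.mulVecLin_apply] at hcc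
    rw [← hcc]
    apply intervalIntegral.integral_congr
    intro s _
    simp [hf, Matrix.mulVecLin_apply, Matrix.mulVec_mulVec, Matrix.mul_assoc]
  have hsub : ∫ s in (0:ℝ)..x, (h⁻¹ * Y x * ((Y s)⁻¹ * B s)).mulVec (φ (s - τ))
      = ∫ u in (-τ)..θ, (Y θ * (Y u)⁻¹ * B u * h⁻¹).mulVec (φ u) := by
    have hshift := intervalIntegral.integral_comp_add_right (a := -τ) (b := θ)
      (fun s => (h⁻¹ * Y x * ((Y s)⁻¹ * B s)).mulVec (φ (s - τ))) τ
    rw [neg_add_cancel, show θ + τ = x from by rw [hx, add_comm]] at hshift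
    rw [← hshift]
    apply intervalIntegral.integral_congr
    intro u _
    show (fun s => (h⁻¹ * Y x * ((Y s)⁻¹ * B s)).mulVec (φ (s - τ))) (u + τ)
      = (Y θ * (Y u)⁻¹ * B u * h⁻¹).mulVec (φ u)
    simp only [add_sub_cancel_right]
    congr 1
    have hYinv_uτ : (Y (τ + u))⁻¹ = (Y τ)⁻¹ * (h * ((Y u)⁻¹ * h⁻¹)) := by
      apply Matrix.inv_eq_right_inv
      rw [key u]
      simp only [Matrix.mul_assoc, mc1, mc2, mcY1, mcY2, hinv, hinv',
        Matrix.mul_nonsing_inv _ (Ydet _), Matrix.nonsing_inv_mul _ (Ydet _)]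
    rw [show u + τ = τ + u from add_comm u τ, hYinv_uτ, hx, key θ,
      show B (τ + u) = h * B u * h⁻¹ from by rw [add_comm τ u, ← hBsym u]]
    simp only [Matrix.mul_assoc, mc1, mc2, mcY1, mcY2, hinv, hinv',
      Matrix.mul_nonsing_inv _ (Ydet _), Matrix.nonsing_inv_mul _ (Ydet _)]
  calc h⁻¹.mulVec (y x)
      = (h⁻¹ * Y x).mulVec (g x) := by rw [hyx, Matrix.mulVec_mulVec]
    _ = (h⁻¹ * Y x).mulVec (φ 0) + (h⁻¹ * Y x).mulVec (∫ s in (0:ℝ)..x, f s) := by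
        rw [hgx, Matrix.mulVec_add]
    _ = (h⁻¹ * Y x).mulVec (φ 0)
        + ∫ s in (-τ)..θ, (Y θ * (Y s)⁻¹ * B s * h⁻¹).mulVec (φ s) := by
        rw [hpull, hsub]
end

section
/- Let A, B : ℝ → ℂ^{N×N} be continuous, h ∈ GL(N,ℂ) with hA(t)h⁻¹ = A(t+τ), hB(t)h⁻¹ = B(t+τ), and for z ∈ ℂ let F(·,z) be the fundamental solution of y' = [A(t) + z·B(t)h⁻¹]y with F(0,z) = I. Let Y be the fundamental solution for B ≡ 0 and define V, D on X = C([-τ,0],ℂ^N) by (Vφ)(θ) = ∫_{-τ}^θ Y(θ)Y(s)⁻¹B(s)h⁻¹φ(s)ds and (Du)(θ) = h⁻¹Y(τ+θ)u for u ∈ ℂ^N. Then for every z ∈ ℂ and u ∈ ℂ^N: ((I - zV)⁻¹Du)(θ) = h⁻¹F(τ+θ, z)u. -/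
open Set intervalIntegral

namespace Stmt15Aux

variable {N : ℕ}

/-- Componentwise derivative of `s ↦ (P s).mulVec (w s)` (product rule). -/
lemma hasDerivAt_matvec {P : ℝ → Matrix (Fin N) (Fin N) ℂ}
    {P' : Matrix (Fin N) (Fin N) ℂ} {w : ℝ → Fin N → ℂ} {w' : Fin N → ℂ} {t : ℝ}
    (hP : ∀ i j, HasDerivAt (fun s => P s i j) (P' i j) t)
    (hw : HasDerivAt w w' t) :
    HasDerivAt (fun s => (P s).mulVec (w s))
      (P'.mulVec (w t) + (P t).mulVec w') t := by
  rw [hasDerivAt_pi]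
  intro i
  have := HasDerivAt.fun_sum (u := Finset.univ)
    (fun j _ => (hP i j).mul ((hasDerivAt_pi.1 hw) j))
  simpa [Matrix.mulVec, dotProduct, Finset.sum_add_distrib] using this

/-- Derivative of `s ↦ (P s).mulVec u` for constant `u`. -/
lemma hasDerivAt_mulVec_const {P : ℝ → Matrix (Fin N) (Fin N) ℂ}
    {P' : Matrix (Fin N) (Fin N) ℂ} {t : ℝ}
    (hP : ∀ i j, HasDerivAt (fun s => P s i j) (P' i j) t) (u : Fin N → ℂ) :
    HasDerivAt (fun s => (P s).mulVec u) (P'.mulVec u) t := by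
  simpa using hasDerivAt_matvec hP (hasDerivAt_const t u)

lemma hasDerivAt_const_mul_entries (C : Matrix (Fin N) (Fin N) ℂ)
    {P : ℝ → Matrix (Fin N) (Fin N) ℂ} {P' : Matrix (Fin N) (Fin N) ℂ} {t : ℝ}
    (hP : ∀ i j, HasDerivAt (fun s => P s i j) (P' i j) t) :
    ∀ i j, HasDerivAt (fun s => (C * P s) i j) ((C * P') i j) t := by
  intro i j
  simpa [Matrix.mul_apply] using
    HasDerivAt.fun_sum (u := Finset.univ) (fun k _ => (hP k j).const_mul (C i k))

lemma hasDerivAt_shift {f : ℝ → ℂ} {f' : ℂ} {τ θ : ℝ} (hf : HasDerivAt f f' (τ + θ)) :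
    HasDerivAt (fun s => f (τ + s)) f' θ := by
  have h1 : HasDerivAt (fun s : ℝ => τ + s) 1 θ := by
    simpa using (hasDerivAt_id θ).const_add τ
  simpa [Function.comp_def] using HasDerivAt.scomp (𝕜 := ℝ) θ hf h1

lemma continuous_matvec {P : ℝ → Matrix (Fin N) (Fin N) ℂ} {w : ℝ → Fin N → ℂ}
    (hP : Continuous P) (hw : Continuous w) :
    Continuous fun s => (P s).mulVec (w s) := by
  refine continuous_pi fun i => ?_
  simp only [Matrix.mulVec, dotProduct]
  exact continuous_finset_sum _ fun j _ =>
    (((continuous_apply j).comp ((continuous_apply i).comp hP))).mul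
      ((continuous_apply j).comp hw)

lemma norm_mulVec_le (W : Matrix (Fin N) (Fin N) ℂ) (x : Fin N → ℂ) :
    ‖W.mulVec x‖ ≤ (∑ i, ∑ j, ‖W i j‖) * ‖x‖ := by
  have hnn : (0:ℝ) ≤ (∑ i, ∑ j, ‖W i j‖) * ‖x‖ :=
    mul_nonneg (Finset.sum_nonneg fun i _ => Finset.sum_nonneg fun j _ => norm_nonneg _)
      (norm_nonneg _)
  rw [pi_norm_le_iff_of_nonneg hnn]
  intro i
  calc ‖W.mulVec x i‖ ≤ ∑ j, ‖W i j * x j‖ := by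
        simpa [Matrix.mulVec, dotProduct] using norm_sum_le Finset.univ (fun j => W i j * x j)
    _ ≤ ∑ j, ‖W i j‖ * ‖x‖ := by
        refine Finset.sum_le_sum fun j _ => ?_
        rw [norm_mul]
        exact mul_le_mul_of_nonneg_left (norm_le_pi_norm x j) (norm_nonneg _)
    _ = (∑ j, ‖W i j‖) * ‖x‖ := by rw [Finset.sum_mul]
    _ ≤ (∑ i, ∑ j, ‖W i j‖) * ‖x‖ := by
        refine mul_le_mul_of_nonneg_right ?_ (norm_nonneg _)
        exact Finset.single_le_sum (f := fun i => ∑ j, ‖W i j‖)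
          (fun i _ => Finset.sum_nonneg fun j _ => norm_nonneg _) (Finset.mem_univ i)

/-- Uniqueness for the affine linear ODE `x' = M t * x + r t` on `[a, b]`. -/
lemma linear_ode_unique {M : ℝ → Matrix (Fin N) (Fin N) ℂ} {r : ℝ → Fin N → ℂ}
    (hM : Continuous M) {a b : ℝ} (hab : a ≤ b)
    {f g : ℝ → Fin N → ℂ}
    (hf : ContinuousOn f (Icc a b)) (hg : ContinuousOn g (Icc a b))
    (hf' : ∀ t ∈ Ico a b,
      HasDerivWithinAt f ((M t).mulVec (f t) + r t) (Ici t) t)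
    (hg' : ∀ t ∈ Ico a b,
      HasDerivWithinAt g ((M t).mulVec (g t) + r t) (Ici t) t)
    (ha : f a = g a) : EqOn f g (Icc a b) := by
  -- clamp coefficients to [a,b] to get a uniform Lipschitz constant
  set p : ℝ → ℝ := fun t => (projIcc a b hab t : ℝ) with hp
  have hpmem : ∀ t, p t ∈ Icc a b := fun t => (projIcc a b hab t).2
  have hpc : Continuous p := continuous_subtype_val.comp (continuous_projIcc)
  have hpid : ∀ t ∈ Icc a b, p t = t := fun t ht => by
    simp [hp, projIcc_of_mem hab ht]
  set S : ℝ → ℝ := fun t => ∑ i, ∑ j, ‖M (p t) i j‖ with hS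
  have hSc : Continuous S := by
    refine continuous_finset_sum _ fun i _ => continuous_finset_sum _ fun j _ => ?_
    exact (((continuous_apply j).comp ((continuous_apply i).comp (hM.comp hpc)))).norm
  obtain ⟨C, hC⟩ : ∃ C, ∀ t ∈ Icc a b, S t ≤ C := by
    obtain ⟨C, hC⟩ := (isCompact_Icc (a := a) (b := b)).exists_bound_of_continuousOn
      (hSc.continuousOn (s := Icc a b))
    exact ⟨C, fun t ht => (le_of_eq (Real.norm_of_nonneg
      (Finset.sum_nonneg fun i _ => Finset.sum_nonneg fun j _ => norm_nonneg _)).symm).trans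
      (hC t ht)⟩
  set v : ℝ → (Fin N → ℂ) → (Fin N → ℂ) := fun t x => (M (p t)).mulVec x + r t with hv
  have hlip : ∀ t, LipschitzWith C.toNNReal (v t) := by
    intro t
    refine LipschitzWith.of_dist_le_mul fun x y => ?_
    have : v t x - v t y = (M (p t)).mulVec (x - y) := by
      simp [hv, Matrix.mulVec_sub]
    rw [dist_eq_norm, dist_eq_norm, this]
    calc ‖(M (p t)).mulVec (x - y)‖ ≤ S (p t) * ‖x - y‖ := by
          have := norm_mulVec_le (M (p t)) (x - y)
          simpa [hS, hpid _ (hpmem t)] using this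
      _ ≤ (C.toNNReal : ℝ) * ‖x - y‖ := by
          refine mul_le_mul_of_nonneg_right ?_ (norm_nonneg _)
          exact (hC _ (hpmem t)).trans (Real.le_coe_toNNReal C)
  refine ODE_solution_unique hlip hf ?_ hg ?_ ha
  · intro t ht
    have := hf' t ht
    rwa [show (M t).mulVec (f t) + r t = v t (f t) by
      simp [hv, hpid t (Ico_subset_Icc_self ht)]] at this
  · intro t ht
    have := hg' t ht
    rwa [show (M t).mulVec (g t) + r t = v t (g t) by
      simp [hv, hpid t (Ico_subset_Icc_self ht)]] at this

end Stmt15Aux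

open Stmt15Aux in
/-- `θ ↦ h⁻¹ F(τ+θ, z) u` is the unique continuous solution of the
integral equation `φ = Du + zVφ`, i.e. `((I - zV)⁻¹ D u)(θ) = h⁻¹ F(τ+θ, z) u`. -/
theorem stmt_15 {N : ℕ} (τ : ℝ) (hτ : 0 < τ)
    (A B : ℝ → Matrix (Fin N) (Fin N) ℂ)
    (hA : Continuous A) (hB : Continuous B)
    (h : Matrix (Fin N) (Fin N) ℂ) (hh : IsUnit h)
    (hAsym : ∀ t, h * A t * h⁻¹ = A (t + τ))
    (hBsym : ∀ t, h * B t * h⁻¹ = B (t + τ))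
    (Y : ℝ → Matrix (Fin N) (Fin N) ℂ)
    (hY0 : Y 0 = 1) (hYu : ∀ t, IsUnit (Y t))
    (hYd : ∀ (t : ℝ) (i j : Fin N),
      HasDerivAt (fun s => Y s i j) ((A t * Y t) i j) t)
    (F : ℝ → ℂ → Matrix (Fin N) (Fin N) ℂ)
    (hF0 : ∀ z, F 0 z = 1) (hFu : ∀ t z, IsUnit (F t z))
    (hFd : ∀ (z : ℂ) (t : ℝ) (i j : Fin N),
      HasDerivAt (fun s => F s z i j) (((A t + z • (B t * h⁻¹)) * F t z) i j) t)
    (z : ℂ) (u : Fin N → ℂ) :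
    (∀ θ ∈ Set.Icc (-τ) 0,
      (h⁻¹ * F (τ + θ) z).mulVec u
        = (h⁻¹ * Y (τ + θ)).mulVec u
          + z • ∫ s in (-τ)..θ,
              (Y θ * (Y s)⁻¹ * B s * h⁻¹ * (h⁻¹ * F (τ + s) z)).mulVec u) ∧
    (∀ ψ : ℝ → (Fin N → ℂ), ContinuousOn ψ (Set.Icc (-τ) 0) →
      (∀ θ ∈ Set.Icc (-τ) 0,
        ψ θ = (h⁻¹ * Y (τ + θ)).mulVec u
          + z • ∫ s in (-τ)..θ, (Y θ * (Y s)⁻¹ * B s * h⁻¹).mulVec (ψ s)) →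
      ∀ θ ∈ Set.Icc (-τ) 0, ψ θ = (h⁻¹ * F (τ + θ) z).mulVec u) := by
  have hab : (-τ : ℝ) ≤ 0 := by linarith
  have hhdet : IsUnit h.det := (Matrix.isUnit_iff_isUnit_det h).1 hh
  have hinv1 : h⁻¹ * h = 1 := Matrix.nonsing_inv_mul h hhdet
  have hYinv : ∀ t, Y t * (Y t)⁻¹ = 1 := fun t =>
    Matrix.mul_nonsing_inv _ ((Matrix.isUnit_iff_isUnit_det _).1 (hYu t))
  -- continuity of Y and Y⁻¹
  have hYc : Continuous Y := continuous_matrix fun i j =>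
    continuous_iff_continuousAt.2 fun t => (hYd t i j).continuousAt
  have hYic : Continuous fun t => (Y t)⁻¹ := by
    have hdne : ∀ t, (Y t).det ≠ 0 := fun t =>
      ((Matrix.isUnit_iff_isUnit_det _).1 (hYu t)).ne_zero
    have : (fun t => (Y t)⁻¹) = fun t => ((Y t).det)⁻¹ • (Y t).adjugate := by
      funext t
      rw [Matrix.inv_def, Ring.inverse_eq_inv']
    rw [this]
    exact (hYc.matrix_det.inv₀ hdne).smul hYc.matrix_adjugate
  -- key symmetry identities
  have hcancel : ∀ X : Matrix (Fin N) (Fin N) ℂ, h⁻¹ * (h * X) = X := fun X => by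
    rw [← mul_assoc, hinv1, one_mul]
  have hKeyA : ∀ θ, h⁻¹ * A (τ + θ) = A θ * h⁻¹ := by
    intro θ
    have hA' : A (τ + θ) = h * (A θ * h⁻¹) := by
      rw [add_comm, ← hAsym θ, mul_assoc]
    rw [hA', hcancel]
  have hKey : ∀ θ, h⁻¹ * (A (τ + θ) + z • (B (τ + θ) * h⁻¹))
      = (A θ + z • (B θ * h⁻¹)) * h⁻¹ := by
    intro θ
    have hB' : B (τ + θ) = h * (B θ * h⁻¹) := by
      rw [add_comm, ← hBsym θ, mul_assoc]
    rw [mul_add, Matrix.mul_smul, hKeyA θ, hB', mul_assoc, hcancel, Matrix.add_mul,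
      Matrix.smul_mul, mul_assoc]
  -- the candidate solution G
  set G : ℝ → Fin N → ℂ := fun θ => (h⁻¹ * F (τ + θ) z).mulVec u with hGdef
  have hGd : ∀ θ, HasDerivAt G
      (((A θ + z • (B θ * h⁻¹)) * (h⁻¹ * F (τ + θ) z)).mulVec u) θ := by
    intro θ
    have hent : ∀ i j, HasDerivAt (fun s => (h⁻¹ * F (τ + s) z) i j)
        ((h⁻¹ * ((A (τ + θ) + z • (B (τ + θ) * h⁻¹)) * F (τ + θ) z)) i j) θ :=
      hasDerivAt_const_mul_entries h⁻¹ fun i j => hasDerivAt_shift (hFd z (τ + θ) i j)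
    have := hasDerivAt_mulVec_const hent u
    rwa [← mul_assoc, hKey θ, mul_assoc] at this
  have hGc : Continuous G := continuous_iff_continuousAt.2 fun θ => (hGd θ).continuousAt
  have hGsplit : ∀ θ, ((A θ + z • (B θ * h⁻¹)) * (h⁻¹ * F (τ + θ) z)).mulVec u
      = (A θ).mulVec (G θ) + z • (B θ * h⁻¹).mulVec (G θ) := by
    intro θ
    simp only [Matrix.add_mul, Matrix.add_mulVec, Matrix.smul_mul, Matrix.smul_mulVec,
      hGdef, Matrix.mulVec_mulVec, mul_assoc]
  -- initial value of G
  have hGinit : G (-τ) = (h⁻¹ * (1 : Matrix (Fin N) (Fin N) ℂ)).mulVec u := by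
    simp [hGdef, hF0]
  -- derivative of the `h⁻¹ Y(τ+θ) u` term
  have hDd : ∀ θ, HasDerivAt (fun s => (h⁻¹ * Y (τ + s)).mulVec u)
      ((A θ).mulVec ((h⁻¹ * Y (τ + θ)).mulVec u)) θ := by
    intro θ
    have hent : ∀ i j, HasDerivAt (fun s => (h⁻¹ * Y (τ + s)) i j)
        ((h⁻¹ * (A (τ + θ) * Y (τ + θ))) i j) θ :=
      hasDerivAt_const_mul_entries h⁻¹ fun i j => hasDerivAt_shift (hYd (τ + θ) i j)
    have := hasDerivAt_mulVec_const hent u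
    rwa [← mul_assoc, hKeyA θ, mul_assoc, ← Matrix.mulVec_mulVec] at this
  -- generic treatment of `θ ↦ hY-term + z • Yθ ∫ q`
  have key : ∀ w : ℝ → Fin N → ℂ, Continuous w →
      ∀ θ, HasDerivAt (fun x => (h⁻¹ * Y (τ + x)).mulVec u
          + z • (Y x).mulVec (∫ s in (-τ)..x, ((Y s)⁻¹ * B s * h⁻¹).mulVec (w s)))
        ((A θ).mulVec ((h⁻¹ * Y (τ + θ)).mulVec u
            + z • (Y θ).mulVec (∫ s in (-τ)..θ, ((Y s)⁻¹ * B s * h⁻¹).mulVec (w s)))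
          + z • (B θ * h⁻¹).mulVec (w θ)) θ := by
    intro w hwc θ
    set q : ℝ → Fin N → ℂ := fun s => ((Y s)⁻¹ * B s * h⁻¹).mulVec (w s) with hq
    have hqc : Continuous q :=
      continuous_matvec ((hYic.matrix_mul hB).matrix_mul continuous_const) hwc
    have hΦ : HasDerivAt (fun x => ∫ s in (-τ)..x, q s) (q θ) θ :=
      intervalIntegral.integral_hasDerivAt_right (hqc.intervalIntegrable _ _)
        (hqc.stronglyMeasurableAtFilter _ _) hqc.continuousAt
    have hd3 : HasDerivAt (fun x => (Y x).mulVec (∫ s in (-τ)..x, q s))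
        ((A θ * Y θ).mulVec (∫ s in (-τ)..θ, q s) + (Y θ).mulVec (q θ)) θ :=
      hasDerivAt_matvec (fun i j => hYd θ i j) hΦ
    have hYq : (Y θ).mulVec (q θ) = (B θ * h⁻¹).mulVec (w θ) := by
      rw [hq, Matrix.mulVec_mulVec, ← mul_assoc, ← mul_assoc, hYinv θ, one_mul]
    have := (hDd θ).add (hd3.const_smul z)
    rw [hYq] at this
    refine this.congr_deriv ?_
    rw [Matrix.mulVec_add, Matrix.mulVec_smul, smul_add]
    simp only [Matrix.mulVec_mulVec]
    abel
  -- part 1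
  have part1core : Set.EqOn G (fun θ => (h⁻¹ * Y (τ + θ)).mulVec u
      + z • (Y θ).mulVec (∫ s in (-τ)..θ, ((Y s)⁻¹ * B s * h⁻¹).mulVec (G s)))
      (Set.Icc (-τ) 0) := by
    set R : ℝ → Fin N → ℂ := fun θ => (h⁻¹ * Y (τ + θ)).mulVec u
      + z • (Y θ).mulVec (∫ s in (-τ)..θ, ((Y s)⁻¹ * B s * h⁻¹).mulVec (G s)) with hR
    have hRd := key G hGc
    have hRc : Continuous R := continuous_iff_continuousAt.2 fun θ => (hRd θ).continuousAt
    refine linear_ode_unique (M := A) (r := fun θ => z • (B θ * h⁻¹).mulVec (G θ))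
      hA hab hGc.continuousOn hRc.continuousOn ?_ ?_ ?_
    · intro t _
      exact ((hGsplit t ▸ hGd t)).hasDerivWithinAt
    · intro t _
      exact (hRd t).hasDerivWithinAt
    · rw [hGinit, hR]
      simp [hY0]
  constructor
  · intro θ hθ
    refine (part1core hθ).trans ?_
    show (h⁻¹ * Y (τ + θ)).mulVec u
        + z • (Y θ).mulVec (∫ s in (-τ)..θ, ((Y s)⁻¹ * B s * h⁻¹).mulVec (G s))
      = _
    have hqc : Continuous fun s => ((Y s)⁻¹ * B s * h⁻¹).mulVec (G s) :=
      continuous_matvec ((hYic.matrix_mul hB).matrix_mul continuous_const) hGc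
    congr 2
    -- rewrite the integral
    set L : (Fin N → ℂ) →L[ℂ] (Fin N → ℂ) :=
      LinearMap.toContinuousLinearMap ((Y θ).mulVecLin) with hL
    have hLapp : ∀ x, L x = (Y θ).mulVec x := fun x => by
      simp [hL]
    rw [show ((Y θ).mulVec (∫ s in (-τ)..θ, ((Y s)⁻¹ * B s * h⁻¹).mulVec (G s)))
        = L (∫ s in (-τ)..θ, ((Y s)⁻¹ * B s * h⁻¹).mulVec (G s)) from (hLapp _).symm,
      ← L.intervalIntegral_comp_comm (hqc.intervalIntegrable _ _)]
    refine intervalIntegral.integral_congr fun s _ => ?_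
    rw [hLapp]
    simp [hGdef, Matrix.mulVec_mulVec, mul_assoc]
  -- part 2
  · intro ψ hψc hψeq
    set ψt : ℝ → Fin N → ℂ := fun t => ψ (Set.projIcc (-τ) 0 hab t) with hψt
    have hψtc : Continuous ψt :=
      hψc.comp_continuous (continuous_subtype_val.comp continuous_projIcc)
        fun t => (Set.projIcc (-τ) 0 hab t).2
    have hagree : ∀ t ∈ Set.Icc (-τ) 0, ψt t = ψ t := fun t ht => by
      simp [hψt, Set.projIcc_of_mem hab ht]
    set q : ℝ → Fin N → ℂ := fun s => ((Y s)⁻¹ * B s * h⁻¹).mulVec (ψt s) with hq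
    have hqc : Continuous q :=
      continuous_matvec ((hYic.matrix_mul hB).matrix_mul continuous_const) hψtc
    set Ψ : ℝ → Fin N → ℂ := fun θ => (h⁻¹ * Y (τ + θ)).mulVec u
      + z • (Y θ).mulVec (∫ s in (-τ)..θ, q s) with hΨ
    have hΨψ : ∀ θ ∈ Set.Icc (-τ) 0, Ψ θ = ψ θ := by
      intro θ hθ
      show (h⁻¹ * Y (τ + θ)).mulVec u + z • (Y θ).mulVec (∫ s in (-τ)..θ, q s) = ψ θ
      rw [hψeq θ hθ]
      congr 2
      set L : (Fin N → ℂ) →L[ℂ] (Fin N → ℂ) :=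
        LinearMap.toContinuousLinearMap ((Y θ).mulVecLin) with hL
      have hLapp : ∀ x, L x = (Y θ).mulVec x := fun x => by simp [hL]
      rw [show ((Y θ).mulVec (∫ s in (-τ)..θ, q s)) = L (∫ s in (-τ)..θ, q s)
          from (hLapp _).symm, ← L.intervalIntegral_comp_comm (hqc.intervalIntegrable _ _)]
      refine intervalIntegral.integral_congr fun s hs => ?_
      have hs' : s ∈ Set.Icc (-τ) 0 := by
        have hsub : Set.uIcc (-τ) θ ⊆ Set.Icc (-τ) 0 := by
          rw [Set.uIcc_of_le hθ.1]
          exact Set.Icc_subset_Icc le_rfl hθ.2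
        exact hsub hs
      rw [hLapp, hq, Matrix.mulVec_mulVec, hagree s hs']
      simp [mul_assoc]
    have hΨd := key ψt hψtc
    have hΨc : Continuous Ψ := continuous_iff_continuousAt.2 fun θ => (hΨd θ).continuousAt
    have core : Set.EqOn Ψ G (Set.Icc (-τ) 0) := by
      refine linear_ode_unique (M := fun t => A t + z • (B t * h⁻¹))
        (r := fun _ => (0 : Fin N → ℂ))
        (hA.add ((hB.matrix_mul continuous_const).const_smul z)) hab
        hΨc.continuousOn hGc.continuousOn ?_ ?_ ?_
      · intro t ht
        have ht' : t ∈ Set.Icc (-τ) 0 := Set.Ico_subset_Icc_self ht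
        have hd := hΨd t
        rw [hagree t ht', ← hΨψ t ht'] at hd
        have : (A t + z • (B t * h⁻¹)).mulVec (Ψ t) + 0
            = (A t).mulVec (Ψ t) + z • (B t * h⁻¹).mulVec (Ψ t) := by
          rw [add_zero, Matrix.add_mulVec, Matrix.smul_mulVec]
        rw [this]
        exact hd.hasDerivWithinAt
      · intro t _
        have : (A t + z • (B t * h⁻¹)).mulVec (G t) + 0
            = ((A t + z • (B t * h⁻¹)) * (h⁻¹ * F (τ + t) z)).mulVec u := by
          rw [add_zero, ← Matrix.mulVec_mulVec]
        rw [this]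
        exact (hGd t).hasDerivWithinAt
      · rw [hGinit, hΨ]
        simp [hY0]
    intro θ hθ
    rw [← hΨψ θ hθ]
    exact core hθ
end

section
/- Let X be a complex Banach space and T = V + R a bounded operator on X, where σ(V) ⊆ {0} and R = DC has finite rank n, with C : X → ℂ^n and D : ℂ^n → X bounded linear. Define Δ(z) = I_{ℂ^n} - zC(I - zV)⁻¹D. Then for μ ∈ ℂ \ {0}: μ⁻¹ is an eigenvalue of T if and only if det Δ(μ) = 0. Moreover x ∈ ker(I - μT), x ≠ 0, corresponds bijectively to c ∈ ker Δ(μ), c ≠ 0, via c = Cx' for a suitable x' (explicitly: x = μ(I-μV)⁻¹Dc gives a bijection ker Δ(μ) → ker(I-μT)). -/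
/-- Kaashoek–Verduyn Lunel eigenvalue correspondence: for
`T = V + DC` with `σ(V) ⊆ {0}` and `Δ(z) = I - zC(I - zV)⁻¹D`, a non-zero `μ⁻¹` is
an eigenvalue of `T` iff `det Δ(μ) = 0`, and `c ↦ μ(I - μV)⁻¹Dc` is a bijection
from `ker Δ(μ)` onto `ker(I - μT)`. -/
theorem stmt_17 {X : Type*} [NormedAddCommGroup X] [NormedSpace ℂ X] [CompleteSpace X]
    (n : ℕ) (V T : X →L[ℂ] X)
    (hσ : spectrum ℂ V ⊆ {0})
    (C : X →L[ℂ] (Fin n → ℂ)) (D : (Fin n → ℂ) →L[ℂ] X)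
    (hT : T = V + D ∘L C)
    (Δ : ℂ → Matrix (Fin n) (Fin n) ℂ)
    (hΔ : ∀ z : ℂ, Δ z = 1 - z • LinearMap.toMatrix'
      ((C ∘L Ring.inverse (1 - z • V) ∘L D : (Fin n → ℂ) →L[ℂ] (Fin n → ℂ)) :
        (Fin n → ℂ) →ₗ[ℂ] (Fin n → ℂ)))
    (μ : ℂ) (hμ : μ ≠ 0) :
    ((∃ x : X, x ≠ 0 ∧ T x = μ⁻¹ • x) ↔ (Δ μ).det = 0) ∧
    Set.BijOn (fun c : Fin n → ℂ => μ • (Ring.inverse (1 - μ • V)) (D c))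
      {c | (Δ μ).mulVec c = 0}
      {x : X | ((1 : X →L[ℂ] X) - μ • T) x = 0} := by
  have hμ' : (μ : ℂ)⁻¹ ≠ 0 := inv_ne_zero hμ
  have hns : (μ : ℂ)⁻¹ ∉ spectrum ℂ V := fun h => hμ' (hσ h)
  have hu0 : IsUnit ((algebraMap ℂ (X →L[ℂ] X)) μ⁻¹ - V) := spectrum.notMem_iff.mp hns
  have hu : IsUnit ((1 : X →L[ℂ] X) - μ • V) := by
    have h : (1 : X →L[ℂ] X) - μ • V
        = (algebraMap ℂ (X →L[ℂ] X) μ) * ((algebraMap ℂ (X →L[ℂ] X)) μ⁻¹ - V) := by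
      rw [mul_sub, ← map_mul, mul_inv_cancel₀ hμ, map_one, Algebra.smul_def]
    rw [h]
    exact (IsUnit.map _ (isUnit_iff_ne_zero.mpr hμ)).mul hu0
  set E : X →L[ℂ] X := Ring.inverse ((1 : X →L[ℂ] X) - μ • V) with hE
  have hE1 : ∀ x : X, ((1 : X →L[ℂ] X) - μ • V) (E x) = x := fun x => by
    have h := congrArg (fun f : X →L[ℂ] X => f x) (Ring.mul_inverse_cancel _ hu)
    simpa [ContinuousLinearMap.mul_apply] using h
  have hE2 : ∀ x : X, E (((1 : X →L[ℂ] X) - μ • V) x) = x := fun x => by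
    have h := congrArg (fun f : X →L[ℂ] X => f x) (Ring.inverse_mul_cancel _ hu)
    simpa [ContinuousLinearMap.mul_apply] using h
  -- mulVec formula for Δ μ
  have hmul : ∀ c : Fin n → ℂ, (Δ μ).mulVec c = c - μ • (C (E (D c))) := by
    intro c
    rw [hΔ, Matrix.sub_mulVec, Matrix.one_mulVec, Matrix.smul_mulVec]
    congr 1
    have h := Matrix.toLin'_apply (LinearMap.toMatrix'
      ((C ∘L E ∘L D : (Fin n → ℂ) →L[ℂ] (Fin n → ℂ)) :
        (Fin n → ℂ) →ₗ[ℂ] (Fin n → ℂ))) c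
    rw [Matrix.toLin'_toMatrix'] at h
    rw [← h]
    rfl
  have hsrc : ∀ c : Fin n → ℂ, (Δ μ).mulVec c = 0 ↔ c = μ • C (E (D c)) := by
    intro c
    rw [hmul, sub_eq_zero]
  -- kernel condition for 1 - μ T
  have hker : ∀ x : X, ((1 : X →L[ℂ] X) - μ • T) x = 0 ↔ x = μ • E (D (C x)) := by
    intro x
    have h1 : ((1 : X →L[ℂ] X) - μ • T) x = x - μ • T x := by
      simp [ContinuousLinearMap.sub_apply]
    have h2 : μ • T x = μ • V x + μ • D (C x) := by
      rw [hT]; simp [smul_add]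
    rw [h1, sub_eq_zero, h2]
    have h3 : ((1 : X →L[ℂ] X) - μ • V) x = x - μ • V x := by
      simp [ContinuousLinearMap.sub_apply]
    constructor
    · intro h
      have h4 : ((1 : X →L[ℂ] X) - μ • V) x = μ • D (C x) := by
        rw [h3, sub_eq_iff_eq_add']
        exact h
      calc x = E (((1 : X →L[ℂ] X) - μ • V) x) := (hE2 x).symm
        _ = E (μ • D (C x)) := by rw [h4]
        _ = μ • E (D (C x)) := by rw [map_smul]
    · intro h
      have h4 : ((1 : X →L[ℂ] X) - μ • V) x = μ • D (C x) := by
        conv_lhs => rw [h]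
        rw [map_smul, hE1]
      rw [h3] at h4
      exact sub_eq_iff_eq_add'.mp h4
  -- the bijection
  have hbij : Set.BijOn (fun c : Fin n → ℂ => μ • E (D c))
      {c | (Δ μ).mulVec c = 0}
      {x : X | ((1 : X →L[ℂ] X) - μ • T) x = 0} := by
    refine ⟨?_, ?_, ?_⟩
    · intro c hc
      have hc' := (hsrc c).mp hc
      rw [Set.mem_setOf_eq, hker]
      have hCx : C (μ • E (D c)) = c := by
        rw [map_smul, ← hc']
      rw [hCx]
    · intro c hc c' hc' hcc
      have h1 := (hsrc c).mp hc
      have h2 := (hsrc c').mp hc'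
      have hC : (μ : ℂ) • C (E (D c)) = μ • C (E (D c')) := by
        have := congrArg C hcc
        simpa [map_smul] using this
      rw [h1, h2]
      exact hC
    · intro x hx
      have hx' := (hker x).mp hx
      refine ⟨C x, ?_, ?_⟩
      · rw [Set.mem_setOf_eq, hsrc]
        calc C x = C (μ • E (D (C x))) := by rw [← hx']
          _ = μ • C (E (D (C x))) := by rw [map_smul]
      · simp only
        rw [← hx']
  refine ⟨?_, hbij⟩
  -- eigenvalue ↔ det = 0
  rw [← Matrix.exists_mulVec_eq_zero_iff]
  constructor
  · rintro ⟨x, hx0, hx⟩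
    have hxker : ((1 : X →L[ℂ] X) - μ • T) x = 0 := by
      rw [hker]
      have : μ • T x = x := by rw [hx, smul_smul, mul_inv_cancel₀ hμ, one_smul]
      have h2 := (hker x)
      -- derive from T x = μ⁻¹ x : (1 - μT) x = 0
      have h3 : ((1 : X →L[ℂ] X) - μ • T) x = x - μ • T x := by
        simp [ContinuousLinearMap.sub_apply]
      rw [← hker, h3, this, sub_self]
    obtain ⟨c, hc, hfc⟩ := hbij.surjOn hxker
    refine ⟨c, ?_, hc⟩
    intro hc0
    apply hx0
    rw [← hfc, hc0]
    simp
  · rintro ⟨c, hc0, hc⟩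
    refine ⟨μ • E (D c), ?_, ?_⟩
    · intro h0
      apply hc0
      have h0' : (fun c : Fin n → ℂ => μ • E (D c)) c = (fun c : Fin n → ℂ => μ • E (D c)) 0 := by
        simpa using h0
      exact hbij.injOn hc (by simp [Set.mem_setOf_eq]) h0'
    · have hm := hbij.mapsTo hc
      rw [Set.mem_setOf_eq, hker] at hm
      -- from (1-μT)x = 0 derive T x = μ⁻¹ x
      have h3 : ((1 : X →L[ℂ] X) - μ • T) (μ • E (D c)) = 0 := (hker _).mpr hm
      have h4 : μ • E (D c) - μ • T (μ • E (D c)) = 0 := by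
        have h5 := h3
        simp only [ContinuousLinearMap.sub_apply, ContinuousLinearMap.one_apply,
          ContinuousLinearMap.smul_apply] at h5
        exact h5
      have h5 : μ • T (μ • E (D c)) = μ • E (D c) := by
        rw [sub_eq_zero] at h4; exact h4.symm
      calc T (μ • E (D c)) = μ⁻¹ • (μ • T (μ • E (D c))) := by
            rw [smul_smul, inv_mul_cancel₀ hμ, one_smul]
        _ = μ⁻¹ • (μ • E (D c)) := by rw [h5]
end
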